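/- arXiv:1509.08813 — 3 statements merged into one kernel-verified Lean document; each statement's English description precedes it below -/
import Mathlib

section
/- Let (X,T) be a multi-sensitive dynamical system. Then (X,T) has positive topological sequence entropy; in fact there exists a strictly increasing sequence N in ℕ with h_N(T) ≥ log 2. -/
open Filter Topology Set Metric

section Defs

variable {X : Type*}

/-- A set is "opene" if it is open and nonempty. -/
def Opene [TopologicalSpace X] (U : Set X) : Prop := IsOpen U ∧ U.Nonempty

/-- `N_T(U,V) = {n ∈ ℕ : U ∩ T⁻ⁿV ≠ ∅}`. -/
def NTset (T : X → X) (U V : Set X) : Set ℕ := {n | (U ∩ T^[n] ⁻¹' V).Nonempty}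

/-- `N_T(x,G) = {n ∈ ℕ : Tⁿx ∈ G}`. -/
def NTpt (T : X → X) (x : X) (G : Set X) : Set ℕ := {n | T^[n] x ∈ G}

/-- `ω_{N_T}(x)`. -/
def omegaNT [TopologicalSpace X] (T : X → X) (x : X) : Set X :=
  {z | ∀ G : Set X, IsOpen G → z ∈ G → ∀ U V : Set X, Opene U → Opene V →
    (NTpt T x G ∩ NTset T U V).Nonempty}

/-- The ω-limit set `ω_T(x)`. -/
def omegaT [TopologicalSpace X] (T : X → X) (x : X) : Set X :=
  {z | ∀ G : Set X, IsOpen G → z ∈ G → (NTpt T x G).Infinite}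

/-- Transitive compact system. -/
def TransCompact [TopologicalSpace X] (T : X → X) : Prop :=
  ∀ x : X, (omegaNT T x).Nonempty

/-- Topologically transitive system. -/
def TopTransitive [TopologicalSpace X] (T : X → X) : Prop :=
  ∀ U V : Set X, Opene U → Opene V → (NTset T U V).Nonempty

/-- Weakly mixing: the product system `(X×X, T×T)` is topologically transitive. -/
def WeaklyMixing [TopologicalSpace X] (T : X → X) : Prop :=
  TopTransitive (fun p : X × X => (T p.1, T p.2))

/-- Totally transitive: `(X, T^k)` is transitive for every `k ≥ 1`. -/
def TotallyTransitive [TopologicalSpace X] (T : X → X) : Prop :=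
  ∀ k : ℕ, 1 ≤ k → TopTransitive (T^[k])

/-- Minimal system: every point has dense orbit. -/
def MinimalSystem [TopologicalSpace X] (T : X → X) : Prop :=
  ∀ x : X, Dense (Set.range fun n : ℕ => T^[n] x)

/-- A minimal subset: nonempty, closed, `T M = M`, with no proper nonempty closed invariant subset. -/
def IsMinimalSubset [TopologicalSpace X] (T : X → X) (M : Set X) : Prop :=
  M.Nonempty ∧ IsClosed M ∧ T '' M = M ∧
    ∀ M' : Set X, M' ⊆ M → M'.Nonempty → IsClosed M' → T '' M' = M' → M' = M

/-- A minimal point: one that lies in some minimal subset. -/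
def IsMinimalPoint [TopologicalSpace X] (T : X → X) (x : X) : Prop :=
  ∃ M : Set X, IsMinimalSubset T M ∧ x ∈ M

/-- An M-system: transitive with a dense set of minimal points. -/
def MSystem [TopologicalSpace X] (T : X → X) : Prop :=
  TopTransitive T ∧ Dense {x : X | IsMinimalPoint T x}

/-- Thick subset of ℕ. -/
def ThickSet (S : Set ℕ) : Prop := ∀ N : ℕ, ∃ m : ℕ, ∀ i ≤ N, m + i ∈ S

/-- Syndetic subset of ℕ. -/
def SyndeticSet (S : Set ℕ) : Prop := ∃ N : ℕ, ∀ i : ℕ, ∃ j ≤ N, i + j ∈ S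

/-- Thickly syndetic subset of ℕ. -/
def ThicklySyndeticSet (S : Set ℕ) : Prop :=
  ∀ N : ℕ, SyndeticSet {m : ℕ | ∀ i ≤ N, m + i ∈ S}

/-- `S_T(U,δ)`. -/
def STset [MetricSpace X] (T : X → X) (U : Set X) (δ : ℝ) : Set ℕ :=
  {n | ∃ x ∈ U, ∃ y ∈ U, δ < dist (T^[n] x) (T^[n] y)}

/-- Thickly sensitive system. -/
def ThicklySensitive [MetricSpace X] (T : X → X) : Prop :=
  ∃ δ : ℝ, 0 < δ ∧ ∀ U : Set X, Opene U → ThickSet (STset T U δ)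

/-- Thickly syndetically sensitive system. -/
def ThicklySyndeticallySensitive [MetricSpace X] (T : X → X) : Prop :=
  ∃ δ : ℝ, 0 < δ ∧ ∀ U : Set X, Opene U → ThicklySyndeticSet (STset T U δ)

/-- Multi-sensitive system. -/
def MultiSensitive [MetricSpace X] (T : X → X) : Prop :=
  ∃ δ : ℝ, 0 < δ ∧ ∀ (k : ℕ) (U : Fin (k + 1) → Set X), (∀ i, Opene (U i)) →
    (⋂ i, STset T (U i) δ).Nonempty

/-- Thickly syndetically transitive system. -/
def ThicklySyndeticallyTransitive [TopologicalSpace X] (T : X → X) : Prop :=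
  ∀ U V : Set X, Opene U → Opene V → ThicklySyndeticSet (NTset T U V)

/-- A proximal pair: `liminf d(Tⁿx,Tⁿy) = 0`. -/
def ProximalPair [MetricSpace X] (T : X → X) (x y : X) : Prop :=
  liminf (fun n : ℕ => dist (T^[n] x) (T^[n] y)) atTop = 0

/-- A proximal system: every pair of points is proximal. -/
def ProximalSystem [MetricSpace X] (T : X → X) : Prop :=
  ∀ x y : X, ProximalPair T x y

/-- The proximal cell of `x`. -/
def ProxCell [MetricSpace X] (T : X → X) (x : X) : Set X :=
  {y | ProximalPair T x y}

/-- Li-Yorke sensitivity. -/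
def LiYorkeSensitive [MetricSpace X] (T : X → X) : Prop :=
  ∃ δ : ℝ, 0 < δ ∧ ∀ x : X, ∀ U ∈ 𝓝 x, ∃ y ∈ U,
    liminf (fun n : ℕ => dist (T^[n] x) (T^[n] y)) atTop = 0 ∧
    δ < limsup (fun n : ℕ => dist (T^[n] x) (T^[n] y)) atTop

/-- Spatio-temporally chaotic system. -/
def SpatioTemporallyChaotic [MetricSpace X] (T : X → X) : Prop :=
  ∀ x : X, ∀ U ∈ 𝓝 x, ∃ y ∈ U,
    liminf (fun n : ℕ => dist (T^[n] x) (T^[n] y)) atTop = 0 ∧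
    0 < limsup (fun n : ℕ => dist (T^[n] x) (T^[n] y)) atTop

/-- A distal point: not proximal to any other point of its orbit closure. -/
def IsDistalPoint [MetricSpace X] (T : X → X) (x : X) : Prop :=
  ∀ y ∈ closure (Set.range fun n : ℕ => T^[n] x), y ≠ x →
    0 < liminf (fun n : ℕ => dist (T^[n] x) (T^[n] y)) atTop

/-- The Lyapunov number `𝕃_r`. -/
noncomputable def LyapR [MetricSpace X] (T : X → X) : ℝ :=
  sSup {δ : ℝ | 0 < δ ∧ ∀ x : X, ∀ U : Set X, IsOpen U → x ∈ U →
    ∃ y ∈ U, ∃ n : ℕ, δ < dist (T^[n] x) (T^[n] y)}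

/-- The Lyapunov number `𝕃̄_r`. -/
noncomputable def LyapRbar [MetricSpace X] (T : X → X) : ℝ :=
  sSup {δ : ℝ | 0 < δ ∧ ∀ x : X, ∀ U : Set X, IsOpen U → x ∈ U →
    ∃ y ∈ U, δ < limsup (fun n : ℕ => dist (T^[n] x) (T^[n] y)) atTop}

/-- `min_{1≤i≤k} d(Tⁿ xᵢ, Tⁿ yᵢ)`. -/
noncomputable def minDist [MetricSpace X] (T : X → X) {k : ℕ}
    (x y : Fin (k + 1) → X) (n : ℕ) : ℝ :=
  Finset.univ.inf' Finset.univ_nonempty (fun i => dist (T^[n] (x i)) (T^[n] (y i)))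

/-- The Lyapunov number `𝕃_{m,r}`. -/
noncomputable def LyapMR [MetricSpace X] (T : X → X) : ℝ :=
  sSup {δ : ℝ | 0 < δ ∧ ∀ (k : ℕ) (x : Fin (k + 1) → X) (U : Fin (k + 1) → Set X),
    (∀ i, IsOpen (U i) ∧ x i ∈ U i) →
    ∃ y : Fin (k + 1) → X, (∀ i, y i ∈ U i) ∧ ∃ n : ℕ, δ < minDist T x y n}

/-- The Lyapunov number `𝕃̄_{m,r}`. -/
noncomputable def LyapMRbar [MetricSpace X] (T : X → X) : ℝ :=
  sSup {δ : ℝ | 0 < δ ∧ ∀ (k : ℕ) (x : Fin (k + 1) → X) (U : Fin (k + 1) → Set X),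
    (∀ i, IsOpen (U i) ∧ x i ∈ U i) →
    ∃ y : Fin (k + 1) → X, (∀ i, y i ∈ U i) ∧
      δ < limsup (fun n : ℕ => minDist T x y n) atTop}

/-- The Lyapunov number `𝕃_{m,d}`. -/
noncomputable def LyapMD [MetricSpace X] (T : X → X) : ℝ :=
  sSup {δ : ℝ | 0 < δ ∧ ∀ (k : ℕ) (U : Fin (k + 1) → Set X), (∀ i, Opene (U i)) →
    ∃ x y : Fin (k + 1) → X, (∀ i, x i ∈ U i ∧ y i ∈ U i) ∧ ∃ n : ℕ, δ < minDist T x y n}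

/-- The Lyapunov number `𝕃̄_{m,d}`. -/
noncomputable def LyapMDbar [MetricSpace X] (T : X → X) : ℝ :=
  sSup {δ : ℝ | 0 < δ ∧ ∀ (k : ℕ) (U : Fin (k + 1) → Set X), (∀ i, Opene (U i)) →
    ∃ x y : Fin (k + 1) → X, (∀ i, x i ∈ U i ∧ y i ∈ U i) ∧
      δ < limsup (fun n : ℕ => minDist T x y n) atTop}

/-- `(k,T,ε)`-separated set with respect to the sequence `ns` (with `ns 0 = 0` by convention). -/
def IsSepSet [MetricSpace X] (T : X → X) (ns : ℕ → ℕ) (k : ℕ) (ε : ℝ) (E : Set X) : Prop :=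
  ∀ x ∈ E, ∀ y ∈ E, x ≠ y → ∃ j < k, ε < dist (T^[ns j] x) (T^[ns j] y)

/-- `sep(k,T,ε)`: maximal cardinality of a `(k,T,ε)`-separated set. -/
noncomputable def sepNum [MetricSpace X] (T : X → X) (ns : ℕ → ℕ) (k : ℕ) (ε : ℝ) : ℕ :=
  sSup {r : ℕ | ∃ E : Finset X, IsSepSet T ns k ε ↑E ∧ E.card = r}

/-- Topological sequence entropy along `ns`:
`h_N(T) = lim_{ε→0} limsup_{k→∞} (1/k) log sep(k,T,ε)` (the limit as `ε → 0⁺` of the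
nonincreasing-in-`ε` quantity, i.e. the supremum over `ε > 0`). -/
noncomputable def seqEntropy [MetricSpace X] (T : X → X) (ns : ℕ → ℕ) : EReal :=
  ⨆ (ε : ℝ) (_ : 0 < ε),
    limsup (fun k : ℕ => ((Real.log (sepNum T ns k ε) / k : ℝ) : EReal)) atTop

end Defs

section Aux

variable {X : Type*} [MetricSpace X] {T : X → X} {δ : ℝ}

lemma aux_tiny [Nonempty X] (hTc : Continuous T) (hδ : 0 < δ) (m : ℕ) :
    ∃ V : Set X, Opene V ∧ ∀ n ∈ STset T V δ, m < n := by
  obtain ⟨z⟩ := (inferInstance : Nonempty X)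
  have h : ∀ j : ℕ, ∃ η > 0, ∀ u : X, dist u z < η → dist (T^[j] u) (T^[j] z) < δ / 2 := by
    intro j
    have hc : ContinuousAt (T^[j]) z := (hTc.iterate j).continuousAt
    rw [Metric.continuousAt_iff] at hc
    obtain ⟨η, hη, hb⟩ := hc (δ / 2) (by linarith)
    exact ⟨η, hη, fun u hu => hb hu⟩
  choose η hη hb using h
  refine ⟨⋂ j ∈ Finset.range (m + 1), Metric.ball z (η j), ⟨?_, ⟨z, ?_⟩⟩, ?_⟩
  · exact isOpen_biInter_finset fun j _ => Metric.isOpen_ball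
  · exact Set.mem_biInter fun j _ => Metric.mem_ball_self (hη j)
  · intro n hn
    by_contra hle
    push_neg at hle
    obtain ⟨x, hx, y, hy, hd⟩ := hn
    have hxm : dist x z < η n :=
      Set.mem_iInter₂.1 hx n (Finset.mem_range.2 (by omega))
    have hym : dist y z < η n :=
      Set.mem_iInter₂.1 hy n (Finset.mem_range.2 (by omega))
    have h1 := hb n x hxm
    have h2 := hb n y hym
    have h3 : dist (T^[n] x) (T^[n] y) ≤
        dist (T^[n] x) (T^[n] z) + dist (T^[n] z) (T^[n] y) := dist_triangle _ _ _
    rw [dist_comm (T^[n] z)] at h3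
    linarith

lemma aux_ms_large [Nonempty X] (hTc : Continuous T) (hδ : 0 < δ)
    (hms : ∀ (k : ℕ) (U : Fin (k + 1) → Set X), (∀ i, Opene (U i)) →
      (⋂ i, STset T (U i) δ).Nonempty)
    {ι : Type*} [Fintype ι] (U : ι → Set X) (hU : ∀ i, Opene (U i)) (m : ℕ) :
    ∃ n, m < n ∧ ∀ i, n ∈ STset T (U i) δ := by
  classical
  obtain ⟨V, hVo, hVb⟩ := aux_tiny hTc hδ m
  let e := Fintype.equivFin ι
  set c := Fintype.card ι with hc
  let W : Fin (c + 1) → Set X := fun j => if h : (j : ℕ) < c then U (e.symm ⟨j, h⟩) else V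
  have hW : ∀ j, Opene (W j) := by
    intro j; by_cases h : (j : ℕ) < c
    · simp only [W, dif_pos h]; exact hU _
    · simp only [W, dif_neg h]; exact hVo
  obtain ⟨n, hn⟩ := hms c W hW
  rw [Set.mem_iInter] at hn
  refine ⟨n, ?_, ?_⟩
  · have h1 := hn (Fin.last c)
    have hWl : W (Fin.last c) = V := by
      simp only [W, Fin.val_last, dif_neg (lt_irrefl c)]
    rw [hWl] at h1
    exact hVb n h1
  · intro i
    have hlt : (e i : ℕ) < c := (e i).isLt
    have h1 := hn ⟨(e i : ℕ), Nat.lt_succ_of_lt hlt⟩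
    have hWi : W ⟨(e i : ℕ), Nat.lt_succ_of_lt hlt⟩ = U i := by
      simp only [W, dif_pos hlt]
      rw [show (⟨(e i : ℕ), hlt⟩ : Fin c) = e i from Fin.eta _ _,
        e.symm_apply_apply]
    rwa [hWi] at h1

lemma aux_step [Nonempty X] (hTc : Continuous T) (hδ : 0 < δ)
    (hms : ∀ (k : ℕ) (U : Fin (k + 1) → Set X), (∀ i, Opene (U i)) →
      (⋂ i, STset T (U i) δ).Nonempty)
    {k : ℕ} (U : (Fin (k + 1) → Bool) → Set X) (hU : ∀ s, Opene (U s)) (m : ℕ) :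
    ∃ (n : ℕ) (U' : (Fin (k + 2) → Bool) → Set X), m < n ∧ (∀ t, Opene (U' t)) ∧
      (∀ t, U' t ⊆ U (t ∘ Fin.castSucc)) ∧
      (∀ s : Fin (k + 1) → Bool, ∀ u ∈ U' (Fin.snoc s false), ∀ v ∈ U' (Fin.snoc s true),
        δ / 2 < dist (T^[n] u) (T^[n] v)) := by
  classical
  obtain ⟨n, hmn, hn⟩ := aux_ms_large hTc hδ hms U hU m
  have key : ∀ s, ∃ A B : Set X, Opene A ∧ Opene B ∧ A ⊆ U s ∧ B ⊆ U s ∧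
      ∀ u ∈ A, ∀ v ∈ B, δ / 2 < dist (T^[n] u) (T^[n] v) := by
    intro s
    obtain ⟨x, hx, y, hy, hd⟩ := hn s
    have hcx : ContinuousAt (T^[n]) x := (hTc.iterate n).continuousAt
    rw [Metric.continuousAt_iff] at hcx
    obtain ⟨ηx, hηx, hbx⟩ := hcx (δ / 4) (by linarith)
    have hcy : ContinuousAt (T^[n]) y := (hTc.iterate n).continuousAt
    rw [Metric.continuousAt_iff] at hcy
    obtain ⟨ηy, hηy, hby⟩ := hcy (δ / 4) (by linarith)
    refine ⟨Metric.ball x ηx ∩ U s, Metric.ball y ηy ∩ U s,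
      ⟨Metric.isOpen_ball.inter (hU s).1, ⟨x, Metric.mem_ball_self hηx, hx⟩⟩,
      ⟨Metric.isOpen_ball.inter (hU s).1, ⟨y, Metric.mem_ball_self hηy, hy⟩⟩,
      Set.inter_subset_right, Set.inter_subset_right, ?_⟩
    intro u hu v hv
    have h1 : dist (T^[n] u) (T^[n] x) < δ / 4 := hbx (Metric.mem_ball.1 hu.1)
    have h2 : dist (T^[n] v) (T^[n] y) < δ / 4 := hby (Metric.mem_ball.1 hv.1)
    have h3 : dist (T^[n] x) (T^[n] y) ≤
        dist (T^[n] x) (T^[n] u) + dist (T^[n] u) (T^[n] v) + dist (T^[n] v) (T^[n] y) :=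
      dist_triangle4 _ _ _ _
    rw [dist_comm (T^[n] x) (T^[n] u)] at h3
    linarith
  choose A B hA hB hAU hBU hsep using key
  refine ⟨n, fun t => if t (Fin.last (k + 1)) = true then B (t ∘ Fin.castSucc)
    else A (t ∘ Fin.castSucc), hmn, ?_, ?_, ?_⟩
  · intro t
    show Opene (if t (Fin.last (k + 1)) = true then _ else _)
    by_cases h : t (Fin.last (k + 1)) = true
    · rw [if_pos h]; exact hB _
    · rw [if_neg h]; exact hA _
  · intro t
    show (if t (Fin.last (k + 1)) = true then B (t ∘ Fin.castSucc)
      else A (t ∘ Fin.castSucc)) ⊆ U (t ∘ Fin.castSucc)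
    by_cases h : t (Fin.last (k + 1)) = true
    · rw [if_pos h]; exact hBU _
    · rw [if_neg h]; exact hAU _
  · intro s u hu v hv
    have hf : (Fin.snoc s false : Fin (k + 2) → Bool) (Fin.last (k + 1)) = false :=
      Fin.snoc_last _ _
    have ht : (Fin.snoc s true : Fin (k + 2) → Bool) (Fin.last (k + 1)) = true :=
      Fin.snoc_last _ _
    have hcomp : ∀ b : Bool, (Fin.snoc s b : Fin (k + 2) → Bool) ∘ Fin.castSucc = s := by
      intro b; funext i; exact Fin.snoc_castSucc _ _ _
    simp only [hf, ht, hcomp, Bool.false_eq_true, if_false, if_true] at hu hv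
    exact hsep s u hu v hv
    

structure AuxChainSt (T : X → X) (δ : ℝ) (k : ℕ) where
  m : ℕ
  U : (Fin (k + 1) → Bool) → Set X
  opene : ∀ s, Opene (U s)
  sep : ∀ s : Fin k → Bool, ∀ u ∈ U (Fin.snoc s false), ∀ v ∈ U (Fin.snoc s true),
    δ / 2 < dist (T^[m] u) (T^[m] v)

lemma aux_base [Nonempty X] (hδ : 0 < δ)
    (hms : ∀ (k : ℕ) (U : Fin (k + 1) → Set X), (∀ i, Opene (U i)) →
      (⋂ i, STset T (U i) δ).Nonempty) :
    ∃ S : AuxChainSt T δ 0, S.m = 0 := by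
  classical
  obtain ⟨n, hn⟩ := hms 0 (fun _ => Set.univ) (fun _ => ⟨isOpen_univ, Set.univ_nonempty⟩)
  rw [Set.mem_iInter] at hn
  obtain ⟨x, -, y, -, hd⟩ := hn 0
  set p := T^[n] x with hp
  set q := T^[n] y with hq
  have hδq : δ / 2 < dist p q := by linarith
  set r := (dist p q - δ / 2) / 4 with hr
  have hrpos : 0 < r := by rw [hr]; linarith
  refine ⟨⟨0, fun s => if s 0 = true then Metric.ball q r else Metric.ball p r, ?_, ?_⟩, rfl⟩
  · intro s
    show Opene (if s 0 = true then _ else _)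
    by_cases h : s 0 = true
    · rw [if_pos h]; exact ⟨Metric.isOpen_ball, ⟨q, Metric.mem_ball_self hrpos⟩⟩
    · rw [if_neg h]; exact ⟨Metric.isOpen_ball, ⟨p, Metric.mem_ball_self hrpos⟩⟩
  · intro s u hu v hv
    have h0 : (Fin.snoc s false : Fin 1 → Bool) 0 = false := by
      simp [Fin.snoc]
    have h1 : (Fin.snoc s true : Fin 1 → Bool) 0 = true := by
      simp [Fin.snoc]
    simp only [h0, h1, Bool.false_eq_true, if_false, if_true] at hu hv
    have hup : dist u p < r := Metric.mem_ball.1 hu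
    have hvq : dist v q < r := Metric.mem_ball.1 hv
    have h3 : dist p q ≤ dist p u + dist u v + dist v q := dist_triangle4 _ _ _ _
    rw [dist_comm p u] at h3
    simpa only [Function.iterate_zero, id_eq] using
      (by linarith : δ / 2 < dist u v)

noncomputable def auxNext [Nonempty X] (hTc : Continuous T) (hδ : 0 < δ)
    (hms : ∀ (k : ℕ) (U : Fin (k + 1) → Set X), (∀ i, Opene (U i)) →
      (⋂ i, STset T (U i) δ).Nonempty)
    {k : ℕ} (S : AuxChainSt T δ k) : AuxChainSt T δ (k + 1) :=
  ⟨(aux_step hTc hδ hms S.U S.opene S.m).choose,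
    (aux_step hTc hδ hms S.U S.opene S.m).choose_spec.choose,
    (aux_step hTc hδ hms S.U S.opene S.m).choose_spec.choose_spec.2.1,
    (aux_step hTc hδ hms S.U S.opene S.m).choose_spec.choose_spec.2.2.2⟩

lemma auxNext_spec [Nonempty X] (hTc : Continuous T) (hδ : 0 < δ)
    (hms : ∀ (k : ℕ) (U : Fin (k + 1) → Set X), (∀ i, Opene (U i)) →
      (⋂ i, STset T (U i) δ).Nonempty)
    {k : ℕ} (S : AuxChainSt T δ k) :
    S.m < (auxNext hTc hδ hms S).m ∧
      ∀ t, (auxNext hTc hδ hms S).U t ⊆ S.U (t ∘ Fin.castSucc) := by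
  have h := (aux_step hTc hδ hms S.U S.opene S.m).choose_spec.choose_spec
  exact ⟨h.1, h.2.2.1⟩

noncomputable def auxChain [Nonempty X] (hTc : Continuous T) (hδ : 0 < δ)
    (hms : ∀ (k : ℕ) (U : Fin (k + 1) → Set X), (∀ i, Opene (U i)) →
      (⋂ i, STset T (U i) δ).Nonempty) : (k : ℕ) → AuxChainSt T δ k :=
  fun k => Nat.rec ((aux_base hδ hms).choose) (fun _ S => auxNext hTc hδ hms S) k

lemma auxChain_nest [Nonempty X] (hTc : Continuous T) (hδ : 0 < δ)
    (hms : ∀ (k : ℕ) (U : Fin (k + 1) → Set X), (∀ i, Opene (U i)) →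
      (⋂ i, STset T (U i) δ).Nonempty) :
    ∀ (k j : ℕ) (h : j ≤ k) (ω : Fin (k + 1) → Bool),
      (auxChain hTc hδ hms k).U ω ⊆
        (auxChain hTc hδ hms j).U (ω ∘ Fin.castLE (Nat.succ_le_succ h)) := by
  intro k
  induction k with
  | zero =>
    intro j h ω
    have hj0 : j = 0 := Nat.le_zero.mp h
    subst hj0
    have heq : ω ∘ Fin.castLE (Nat.succ_le_succ (le_refl 0)) = ω := by
      funext i; rfl
    rw [heq]
  | succ k ih =>
    intro j h ω
    rcases Nat.lt_or_ge j (k + 1) with hj | hj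
    · have hjk : j ≤ k := by omega
      have h1 : (auxChain hTc hδ hms (k + 1)).U ω ⊆
          (auxChain hTc hδ hms k).U (ω ∘ Fin.castSucc) :=
        (auxNext_spec hTc hδ hms (auxChain hTc hδ hms k)).2 ω
      refine h1.trans ?_
      have h2 := ih j hjk (ω ∘ Fin.castSucc)
      have heq : (ω ∘ Fin.castSucc) ∘ Fin.castLE (Nat.succ_le_succ hjk) =
          ω ∘ Fin.castLE (Nat.succ_le_succ h) := by
        funext i; rfl
      rwa [heq] at h2
    · have hjeq : j = k + 1 := by omega
      subst hjeq
      have heq : ω ∘ Fin.castLE (Nat.succ_le_succ h) = ω := by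
        funext i; rfl
      rw [heq]

lemma aux_sep_points [Nonempty X] (hTc : Continuous T) (hδ : 0 < δ)
    (hms : ∀ (k : ℕ) (U : Fin (k + 1) → Set X), (∀ i, Opene (U i)) →
      (⋂ i, STset T (U i) δ).Nonempty) (k : ℕ) :
    ∃ x : (Fin (k + 1) → Bool) → X, ∀ ω ω' : Fin (k + 1) → Bool, ω ≠ ω' →
      ∃ j < k + 1, δ / 2 < dist (T^[(auxChain hTc hδ hms j).m] (x ω))
        (T^[(auxChain hTc hδ hms j).m] (x ω')) := by
  classical
  have hne : ∀ ω, ((auxChain hTc hδ hms k).U ω).Nonempty := fun ω =>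
    ((auxChain hTc hδ hms k).opene ω).2
  choose x hx using hne
  refine ⟨x, ?_⟩
  intro ω ω' hωω'
  set F := Finset.univ.filter (fun i : Fin (k + 1) => ω i ≠ ω' i) with hF
  have hFne : F.Nonempty := by
    by_contra h
    rw [Finset.not_nonempty_iff_eq_empty, Finset.filter_eq_empty_iff] at h
    apply hωω'
    funext i
    exact not_not.mp (h (Finset.mem_univ i))
  set j := F.min' hFne with hjdef
  have hjmem : j ∈ F := F.min'_mem hFne
  have hjne : ω j ≠ ω' j := (Finset.mem_filter.1 hjmem).2
  have hmin : ∀ i : Fin (k + 1), i < j → ω i = ω' i := by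
    intro i hi
    by_contra hne'
    exact absurd (F.min'_le i (Finset.mem_filter.2 ⟨Finset.mem_univ _, hne'⟩)) (not_le.2 hi)
  have hjk : (j : ℕ) ≤ k := Nat.lt_succ_iff.mp j.isLt
  have hcast : (j : ℕ) + 1 ≤ k + 1 := by omega
  set f : Fin ((j : ℕ) + 1) → Bool := ω ∘ Fin.castLE hcast with hfdef
  set g : Fin ((j : ℕ) + 1) → Bool := ω' ∘ Fin.castLE hcast with hgdef
  have hxf : x ω ∈ (auxChain hTc hδ hms (j : ℕ)).U f :=
    auxChain_nest hTc hδ hms k (j : ℕ) hjk ω (hx ω)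
  have hxg : x ω' ∈ (auxChain hTc hδ hms (j : ℕ)).U g :=
    auxChain_nest hTc hδ hms k (j : ℕ) hjk ω' (hx ω')
  have hinit : Fin.init f = Fin.init g := by
    funext i
    simp only [Fin.init, hfdef, hgdef, Function.comp_apply]
    apply hmin
    rw [Fin.lt_def]
    simpa using i.isLt
  have hflast : f (Fin.last _) = ω j := by
    rw [hfdef]; rfl
  have hglast : g (Fin.last _) = ω' j := by
    rw [hgdef]; rfl
  have hfsnoc : f = Fin.snoc (Fin.init f) (ω j) := by
    rw [← hflast]; exact (Fin.snoc_init_self f).symm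
  have hgsnoc : g = Fin.snoc (Fin.init f) (ω' j) := by
    rw [hinit, ← hglast]; exact (Fin.snoc_init_self g).symm
  refine ⟨(j : ℕ), j.isLt, ?_⟩
  rcases Bool.eq_false_or_eq_true (ω j) with hb | hb
  · have hb' : ω' j = false := by
      rcases Bool.eq_false_or_eq_true (ω' j) with h' | h'
      · exact absurd (by rw [hb, h']) hjne
      · exact h'
    rw [hb] at hfsnoc; rw [hb'] at hgsnoc
    rw [hfsnoc] at hxf; rw [hgsnoc] at hxg
    rw [dist_comm]
    exact (auxChain hTc hδ hms (j : ℕ)).sep (Fin.init f) (x ω') hxg (x ω) hxf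
  · have hb' : ω' j = true := by
      rcases Bool.eq_false_or_eq_true (ω' j) with h' | h'
      · exact h'
      · exact absurd (by rw [hb, h']) hjne
    rw [hb] at hfsnoc; rw [hb'] at hgsnoc
    rw [hfsnoc] at hxf; rw [hgsnoc] at hxg
    exact (auxChain hTc hδ hms (j : ℕ)).sep (Fin.init f) (x ω) hxf (x ω') hxg

lemma aux_sep_bdd [CompactSpace X] (hTc : Continuous T) (ns : ℕ → ℕ) (K : ℕ) {ε : ℝ}
    (hε : 0 < ε) :
    BddAbove {r : ℕ | ∃ E : Finset X, IsSepSet T ns K ε ↑E ∧ E.card = r} := by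
  classical
  have hucont : ∃ η > 0, ∀ j < K, ∀ x y : X, dist x y < η →
      dist (T^[ns j] x) (T^[ns j] y) ≤ ε := by
    induction K with
    | zero => exact ⟨1, one_pos, fun j hj => absurd hj (by omega)⟩
    | succ K ih =>
      obtain ⟨η, hη, hb⟩ := ih
      have hu : UniformContinuous (T^[ns K]) :=
        CompactSpace.uniformContinuous_of_continuous (hTc.iterate _)
      rw [Metric.uniformContinuous_iff] at hu
      obtain ⟨η', hη', hb'⟩ := hu ε hε
      refine ⟨min η η', lt_min hη hη', fun j hj x y hxy => ?_⟩
      rcases Nat.lt_or_ge j K with h | h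
      · exact hb j h x y (hxy.trans_le (min_le_left _ _))
      · have hjK : j = K := by omega
        subst hjK
        exact (hb' (hxy.trans_le (min_le_right _ _))).le
  obtain ⟨η, hη, hb⟩ := hucont
  obtain ⟨t, ht⟩ := IsCompact.elim_finite_subcover isCompact_univ
    (fun c : X => Metric.ball c (η / 2)) (fun _ => Metric.isOpen_ball)
    (fun y _ => Set.mem_iUnion.2 ⟨y, Metric.mem_ball_self (by linarith)⟩)
  refine ⟨t.card, ?_⟩
  rintro r ⟨E, hE, rfl⟩
  by_contra hlt
  push_neg at hlt
  set φ : X → X := fun a =>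
    if h : ∃ c ∈ t, a ∈ Metric.ball c (η / 2) then h.choose else a with hφ
  have hmem : ∀ a : X, ∃ c ∈ t, a ∈ Metric.ball c (η / 2) := by
    intro a
    have := ht (Set.mem_univ a)
    simpa using this
  have hmaps : ∀ a ∈ E, φ a ∈ t := by
    intro a _
    rw [hφ]
    simp only [dif_pos (hmem a)]
    exact (hmem a).choose_spec.1
  have hball : ∀ a : X, a ∈ Metric.ball (φ a) (η / 2) := by
    intro a
    rw [hφ]
    simp only [dif_pos (hmem a)]
    exact (hmem a).choose_spec.2
  obtain ⟨a, ha, b, hb2, hab, hfab⟩ :=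
    Finset.exists_ne_map_eq_of_card_lt_of_maps_to hlt hmaps
  have hdab : dist a b < η := by
    have h1 : dist a (φ a) < η / 2 := Metric.mem_ball.1 (hball a)
    have h2 : dist b (φ b) < η / 2 := Metric.mem_ball.1 (hball b)
    rw [hfab] at h1
    calc dist a b ≤ dist a (φ b) + dist b (φ b) := dist_triangle_right _ _ _
      _ < η := by linarith
  obtain ⟨j, hj, hd⟩ := hE a (Finset.mem_coe.2 ha) b (Finset.mem_coe.2 hb2) hab
  exact absurd (hb j hj a b hdab) (not_le.2 hd)

lemma aux_sepNum_ge [Nonempty X] [CompactSpace X] (hTc : Continuous T) (hδ : 0 < δ)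
    (hms : ∀ (k : ℕ) (U : Fin (k + 1) → Set X), (∀ i, Opene (U i)) →
      (⋂ i, STset T (U i) δ).Nonempty) (k : ℕ) :
    2 ^ (k + 1) ≤ sepNum T (fun j => (auxChain hTc hδ hms j).m) (k + 1) (δ / 2) := by
  classical
  obtain ⟨x, hx⟩ := aux_sep_points hTc hδ hms k
  have hxinj : Function.Injective x := by
    intro ω ω' h
    by_contra hne
    obtain ⟨j, hj, hd⟩ := hx ω ω' hne
    rw [h, dist_self] at hd
    linarith
  have hsep : IsSepSet T (fun j => (auxChain hTc hδ hms j).m) (k + 1) (δ / 2)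
      ↑(Finset.univ.image x) := by
    intro a ha b hb hab
    simp only [Finset.coe_image, Finset.coe_univ, Set.image_univ, Set.mem_range] at ha hb
    obtain ⟨ω, rfl⟩ := ha
    obtain ⟨ω', rfl⟩ := hb
    exact hx ω ω' (fun h => hab (by rw [h]))
  have hcard : (Finset.univ.image x).card = 2 ^ (k + 1) := by
    rw [Finset.card_image_of_injective _ hxinj, Finset.card_univ]
    simp [Fintype.card_fun]
  exact le_csSup (aux_sep_bdd hTc _ _ (by linarith)) ⟨_, hsep, hcard⟩

end Aux

/-- Every multi-sensitive system has positive topological sequence entropy;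
in fact there is a strictly increasing sequence `ns` (with `ns 0 = 0` by convention) along
which the topological sequence entropy is at least `log 2`. -/
theorem stmt16 {X : Type*} [MetricSpace X] [CompactSpace X] [Nontrivial X]
    (hperf : ∀ x : X, (𝓝[≠] x).NeBot)
    {T : X → X} (hTc : Continuous T) (hTs : Function.Surjective T)
    (hms : MultiSensitive T) :
    ∃ ns : ℕ → ℕ, ns 0 = 0 ∧ StrictMono ns ∧
      (Real.log 2 : EReal) ≤ seqEntropy T ns ∧ (0 : EReal) < seqEntropy T ns := by
  obtain ⟨δ, hδ, hmsf⟩ := hms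
  set ns : ℕ → ℕ := fun j => (auxChain hTc hδ hmsf j).m with hnsdef
  have hns0 : ns 0 = 0 := (aux_base hδ hmsf).choose_spec
  have hmono : StrictMono ns := strictMono_nat_of_lt_succ fun k =>
    (auxNext_spec hTc hδ hmsf (auxChain hTc hδ hmsf k)).1
  have hδ2 : 0 < δ / 2 := by linarith
  have hsepnum : ∀ k : ℕ, 2 ^ (k + 1) ≤ sepNum T ns (k + 1) (δ / 2) := fun k =>
    aux_sepNum_ge hTc hδ hmsf k
  have hlim : (Real.log 2 : EReal) ≤
      limsup (fun k : ℕ => ((Real.log (sepNum T ns k (δ / 2)) / k : ℝ) : EReal)) atTop := by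
    have hev : ∀ᶠ k : ℕ in atTop, (Real.log 2 : EReal) ≤
        ((Real.log (sepNum T ns k (δ / 2)) / k : ℝ) : EReal) := by
      filter_upwards [Filter.eventually_ge_atTop 1] with k hk
      obtain ⟨k', rfl⟩ : ∃ k', k = k' + 1 := ⟨k - 1, by omega⟩
      have h1 : (2 : ℝ) ^ (k' + 1) ≤ (sepNum T ns (k' + 1) (δ / 2) : ℝ) := by
        exact_mod_cast hsepnum k'
      have h2 : Real.log ((2 : ℝ) ^ (k' + 1)) ≤
          Real.log (sepNum T ns (k' + 1) (δ / 2)) :=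
        Real.log_le_log (by positivity) h1
      rw [Real.log_pow] at h2
      have hk1 : (0 : ℝ) < ((k' + 1 : ℕ) : ℝ) := by positivity
      rw [EReal.coe_le_coe_iff, le_div_iff₀ hk1]
      calc Real.log 2 * ((k' + 1 : ℕ) : ℝ) = ((k' + 1 : ℕ) : ℝ) * Real.log 2 :=
            mul_comm _ _
        _ ≤ _ := by exact_mod_cast h2
    calc (Real.log 2 : EReal)
        = liminf (fun _ : ℕ => (Real.log 2 : EReal)) atTop := (Filter.liminf_const _).symm
      _ ≤ liminf (fun k : ℕ => ((Real.log (sepNum T ns k (δ / 2)) / k : ℝ) : EReal)) atTop :=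
          Filter.liminf_le_liminf hev
      _ ≤ _ := Filter.liminf_le_limsup
  have hent : (Real.log 2 : EReal) ≤ seqEntropy T ns := by
    rw [seqEntropy]
    exact le_trans hlim (le_iSup_of_le (δ / 2) (le_iSup_of_le hδ2 le_rfl))
  refine ⟨ns, hns0, hmono, hent, lt_of_lt_of_le ?_ hent⟩
  exact_mod_cast Real.log_pos one_lt_two
end

section
/- Let (X,T) be a proximal dynamical system, let p ∈ X be its fixed point with a neighborhood U_p, and let x ∈ X. Then the set N_T(x, U_p) is thickly syndetic. -/
open Filter Topology Set Metric

lemma freq_close {X : Type*} [MetricSpace X] [CompactSpace X] {T : X → X} {p z : X}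
    (hp : T p = p) (h : liminf (fun n : ℕ => dist (T^[n] z) (T^[n] p)) atTop = 0)
    {δ : ℝ} (hδ : 0 < δ) : ∃ n, dist (T^[n] z) p < δ := by
  have hb : IsBoundedUnder (· ≤ ·) atTop (fun n : ℕ => dist (T^[n] z) (T^[n] p)) :=
    isBoundedUnder_of ⟨Metric.diam (univ : Set X), fun n =>
      dist_le_diam_of_mem isCompact_univ.isBounded (mem_univ _) (mem_univ _)⟩
  have := frequently_lt_of_liminf_lt hb.isCoboundedUnder_ge (by rw [h]; exact hδ)
  obtain ⟨n, hn⟩ := this.exists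
  exact ⟨n, by simpa [Function.iterate_fixed hp] using hn⟩

/-- In a proximal system with fixed point p, visits of any point to any ball around p
are syndetic. -/
lemma synd_ball {X : Type*} [MetricSpace X] [CompactSpace X] {T : X → X}
    (hTc : Continuous T) (hprox : ProximalSystem T) {p : X} (hp : T p = p)
    (x : X) {δ : ℝ} (hδ : 0 < δ) : SyndeticSet (NTpt T x (ball p δ)) := by
  by_contra hcon
  unfold SyndeticSet at hcon
  push_neg at hcon
  choose m hm using hcon
  obtain ⟨z, -, φ, hφ, hz⟩ := isCompact_univ.tendsto_subseq
    (fun k : ℕ => mem_univ (T^[m k] x))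
  have hzi : ∀ i : ℕ, T^[i] z ∉ ball p δ := by
    intro i
    have hcont : Tendsto (fun k => T^[i] (T^[m (φ k)] x)) atTop (𝓝 (T^[i] z)) :=
      ((hTc.iterate i).tendsto z).comp hz
    have hmem : ∀ᶠ k in atTop, T^[i] (T^[m (φ k)] x) ∈ (ball p δ)ᶜ := by
      filter_upwards [eventually_ge_atTop i] with k hk
      have : T^[i] (T^[m (φ k)] x) = T^[m (φ k) + i] x := by
        rw [add_comm, Function.iterate_add_apply]
      rw [this]
      exact hm (φ k) i (hk.trans hφ.le_apply)
    exact isOpen_ball.isClosed_compl.mem_of_tendsto hcont hmem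
  obtain ⟨n, hn⟩ := freq_close hp (hprox z p) hδ
  exact hzi n (mem_ball.mpr hn)

/-- In a proximal system with fixed point `p`, for any neighborhood `U` of `p`
and any point `x`, the set `N_T(x,U)` is thickly syndetic. -/
theorem stmt18 {X : Type*} [MetricSpace X] [CompactSpace X] [Nontrivial X]
    (hperf : ∀ x : X, (𝓝[≠] x).NeBot)
    {T : X → X} (hTc : Continuous T) (hTs : Function.Surjective T)
    (hprox : ProximalSystem T) (p : X) (hp : T p = p)
    (U : Set X) (hU : U ∈ 𝓝 p) (x : X) :
    ThicklySyndeticSet (NTpt T x U) := by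
  intro N
  obtain ⟨ε, hε, hεU⟩ := Metric.mem_nhds_iff.mp hU
  have hW : (⋂ i ∈ Finset.range (N + 1), T^[i] ⁻¹' ball p ε) ∈ 𝓝 p := by
    refine (Filter.biInter_finset_mem _).mpr fun i _ => ?_
    exact (hTc.iterate i).continuousAt.preimage_mem_nhds
      (by rw [Function.iterate_fixed hp]; exact ball_mem_nhds p hε)
  obtain ⟨δ, hδ, hδW⟩ := Metric.mem_nhds_iff.mp hW
  obtain ⟨K, hK⟩ := synd_ball hTc hprox hp x hδ
  refine ⟨K, fun i => ?_⟩
  obtain ⟨j, hj, hjb⟩ := hK i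
  refine ⟨j, hj, fun k hk => ?_⟩
  have h1 : T^[i + j] x ∈ ⋂ i ∈ Finset.range (N + 1), T^[i] ⁻¹' ball p ε := hδW hjb
  have h2 : T^[k] (T^[i + j] x) ∈ ball p ε :=
    mem_iInter₂.mp h1 k (Finset.mem_range.mpr (Nat.lt_succ_of_le hk))
  have h3 : T^[i + j + k] x = T^[k] (T^[i + j] x) := by
    rw [add_comm, Function.iterate_add_apply]
  exact mem_setOf.mpr (by rw [h3]; exact hεU h2)
end

section
/- For any dynamical system (X,T), the Lyapunov numbers satisfy 𝕃_{m,d} ≤ 2·𝕃̄_{m,r}. -/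
open Filter Topology Set Metric

lemma unif_iter {X : Type*} [MetricSpace X] [CompactSpace X] {T : X → X}
    (hT : Continuous T) (N : ℕ) {ε : ℝ} (hε : 0 < ε) :
    ∃ η > 0, ∀ a b : X, dist a b < η → ∀ j < N, dist (T^[j] a) (T^[j] b) < ε := by
  have hF : Continuous (fun x : X => fun j : Fin N => T^[(j : ℕ)] x) :=
    continuous_pi fun j => hT.iterate j
  have hu := CompactSpace.uniformContinuous_of_continuous hF
  rw [Metric.uniformContinuous_iff] at hu
  obtain ⟨η, hη, h⟩ := hu ε hε
  refine ⟨η, hη, fun a b hab j hj => ?_⟩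
  have h2 := h hab
  have h3 := dist_le_pi_dist (fun j : Fin N => T^[(j : ℕ)] a)
    (fun j : Fin N => T^[(j : ℕ)] b) ⟨j, hj⟩
  simp only at h3
  exact lt_of_le_of_lt h3 h2

/-- For any dynamical system, `𝕃_{m,d} ≤ 2 𝕃̄_{m,r}`. -/
theorem stmt19 {X : Type*} [MetricSpace X] [CompactSpace X] [Nontrivial X]
    (hperf : ∀ x : X, (𝓝[≠] x).NeBot)
    {T : X → X} (hTc : Continuous T) (hTs : Function.Surjective T) :
    LyapMD T ≤ 2 * LyapMRbar T := by
  classical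
  obtain ⟨C, hC⟩ := Metric.isBounded_iff.mp (isCompact_univ (X := X)).isBounded
  have hdC : ∀ x y : X, dist x y ≤ C := fun x y => hC (mem_univ x) (mem_univ y)
  have hmb : ∀ (k : ℕ) (x y : Fin (k+1) → X) (n : ℕ), minDist T x y n ≤ C := fun k x y n =>
    le_trans (Finset.inf'_le _ (Finset.mem_univ 0)) (hdC _ _)
  have hm0 : ∀ (k : ℕ) (x y : Fin (k+1) → X) (n : ℕ), 0 ≤ minDist T x y n := fun k x y n =>
    Finset.le_inf' _ _ fun i _ => dist_nonneg
  have hlimsup_le : ∀ (k : ℕ) (x y : Fin (k+1) → X),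
      limsup (fun n => minDist T x y n) atTop ≤ C := by
    intro k x y
    refine Filter.limsup_le_of_le ?_ (Filter.Eventually.of_forall fun n => hmb k x y n)
    exact Filter.IsBoundedUnder.isCoboundedUnder_le
      (Filter.isBoundedUnder_of ⟨0, fun n => hm0 k x y n⟩)
  have hbdd : BddAbove {δ : ℝ | 0 < δ ∧ ∀ (k : ℕ) (x : Fin (k + 1) → X)
      (U : Fin (k + 1) → Set X), (∀ i, IsOpen (U i) ∧ x i ∈ U i) →
      ∃ y : Fin (k + 1) → X, (∀ i, y i ∈ U i) ∧
        δ < limsup (fun n : ℕ => minDist T x y n) atTop} := by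
    refine ⟨C, fun δ' hδ' => ?_⟩
    obtain ⟨x0⟩ : Nonempty X := inferInstance
    obtain ⟨y, -, hy⟩ := hδ'.2 0 (fun _ => x0) (fun _ => univ)
      (fun i => ⟨isOpen_univ, mem_univ _⟩)
    exact le_trans hy.le (hlimsup_le _ _ _)
  have hMR0 : 0 ≤ LyapMRbar T := by
    unfold LyapMRbar
    exact Real.sSup_nonneg fun δ' h => h.1.le
  unfold LyapMD
  refine Real.sSup_le (fun δ hδ => ?_) (by linarith)
  obtain ⟨hδ0, H⟩ := hδ
  -- MD witnesses with arbitrarily large times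
  have HN : ∀ (k : ℕ) (U : Fin (k+1) → Set X), (∀ i, Opene (U i)) → ∀ N : ℕ,
      ∃ x y : Fin (k+1) → X, (∀ i, x i ∈ U i ∧ y i ∈ U i) ∧
        ∃ n, N ≤ n ∧ δ < minDist T x y n := by
    intro k U hU N
    obtain ⟨η, hη, hun⟩ := unif_iter hTc N hδ0
    have hpex : ∀ i, ∃ p, p ∈ U i := fun i => (hU i).2
    choose p hp using hpex
    have hU' : ∀ i, Opene (U i ∩ ball (p i) (η/2)) := fun i =>
      ⟨(hU i).1.inter isOpen_ball, ⟨p i, hp i, mem_ball_self (by linarith)⟩⟩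
    obtain ⟨x, y, hxy, n, hn⟩ := H k (fun i => U i ∩ ball (p i) (η/2)) hU'
    refine ⟨x, y, fun i => ⟨(hxy i).1.1, (hxy i).2.1⟩, n, ?_, hn⟩
    by_contra hlt
    push_neg at hlt
    have h1 := (hxy 0).1.2
    have h2 := (hxy 0).2.2
    rw [mem_ball] at h1 h2
    have hd : dist (x 0) (y 0) < η := by
      have htri := dist_triangle (x 0) (p 0) (y 0)
      rw [dist_comm (p 0) (y 0)] at htri
      linarith
    have h3 := hun (x 0) (y 0) hd n hlt
    have h4 : minDist T x y n ≤ dist (T^[n] (x 0)) (T^[n] (y 0)) :=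
      Finset.inf'_le _ (Finset.mem_univ 0)
    linarith
  have key : ∀ δ' : ℝ, 0 < δ' → δ' < δ/2 → δ' ≤ LyapMRbar T := by
    intro δ' hδ'0 hδ'lt
    unfold LyapMRbar
    refine le_csSup hbdd ⟨hδ'0, ?_⟩
    intro k a U hUa
    have hU0 : ∀ i, Opene (U i) := fun i => ⟨(hUa i).1, ⟨a i, (hUa i).2⟩⟩
    have step : ∀ (m : ℕ) (V : {V : Fin (k+1) → Set X // ∀ i, Opene (V i)}),
        ∃ q : {V : Fin (k+1) → Set X // ∀ i, Opene (V i)} × ℕ, m ≤ q.2 ∧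
          (∀ i, closure (q.1.1 i) ⊆ V.1 i) ∧
          (∀ i, ∀ w ∈ q.1.1 i, δ/2 < dist (T^[q.2] (a i)) (T^[q.2] w)) := by
      intro m V
      obtain ⟨x, y, hxy, n, hNn, hmin⟩ := HN k V.1 V.2 m
      have hall : ∀ i, δ < dist (T^[n] (x i)) (T^[n] (y i)) := by
        intro i
        unfold minDist at hmin
        rw [Finset.lt_inf'_iff] at hmin
        exact hmin i (Finset.mem_univ i)
      set z : Fin (k+1) → X := fun i =>
        if δ/2 < dist (T^[n] (a i)) (T^[n] (x i)) then x i else y i with hzdef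
      have hzmem : ∀ i, z i ∈ V.1 i ∧ δ/2 < dist (T^[n] (a i)) (T^[n] (z i)) := by
        intro i
        by_cases h : δ/2 < dist (T^[n] (a i)) (T^[n] (x i))
        · simp only [hzdef, if_pos h]
          exact ⟨(hxy i).1, h⟩
        · simp only [hzdef, if_neg h]
          refine ⟨(hxy i).2, ?_⟩
          push_neg at h
          have htri := dist_triangle (T^[n] (x i)) (T^[n] (a i)) (T^[n] (y i))
          rw [dist_comm (T^[n] (x i)) (T^[n] (a i))] at htri
          have := hall i
          linarith
      have hG : ∀ i, ∃ r > 0, closedBall (z i) r ⊆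
          V.1 i ∩ {w | δ/2 < dist (T^[n] (a i)) (T^[n] w)} := by
        intro i
        have hopen : IsOpen (V.1 i ∩ {w | δ/2 < dist (T^[n] (a i)) (T^[n] w)}) := by
          refine (V.2 i).1.inter ?_
          exact isOpen_lt continuous_const (continuous_const.dist (hTc.iterate n))
        have hmemz : z i ∈ V.1 i ∩ {w | δ/2 < dist (T^[n] (a i)) (T^[n] w)} :=
          ⟨(hzmem i).1, (hzmem i).2⟩
        obtain ⟨r, hr, hsub⟩ :=
          (Metric.nhds_basis_closedBall.mem_iff).1 (hopen.mem_nhds hmemz)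
        exact ⟨r, hr, hsub⟩
      choose r hr hsub using hG
      refine ⟨(⟨fun i => ball (z i) (r i),
        fun i => ⟨isOpen_ball, ⟨z i, mem_ball_self (hr i)⟩⟩⟩, n), hNn, ?_, ?_⟩
      · intro i
        exact (closure_ball_subset_closedBall.trans (hsub i)).trans inter_subset_left
      · intro i w hw
        exact ((hsub i) (ball_subset_closedBall hw)).2
    let g : ℕ → {V : Fin (k+1) → Set X // ∀ i, Opene (V i)} × ℕ :=
      fun m => Nat.rec (⟨⟨U, hU0⟩, 0⟩) (fun m q => Classical.choose (step m q.1)) m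
    have hgspec : ∀ m, m ≤ (g (m+1)).2 ∧
        (∀ i, closure ((g (m+1)).1.1 i) ⊆ (g m).1.1 i) ∧
        (∀ i, ∀ w ∈ (g (m+1)).1.1 i,
          δ/2 < dist (T^[(g (m+1)).2] (a i)) (T^[(g (m+1)).2] w)) :=
      fun m => Classical.choose_spec (step m (g m).1)
    have hy : ∀ i : Fin (k+1), ∃ q, q ∈ ⋂ m, closure ((g m).1.1 i) := by
      intro i
      exact IsCompact.nonempty_iInter_of_sequence_nonempty_isCompact_isClosed
        (fun m => closure ((g m).1.1 i))
        (fun m => ((hgspec m).2.1 i).trans subset_closure)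
        (fun m => (((g m).1.2 i).2).mono subset_closure)
        isClosed_closure.isCompact
        (fun m => isClosed_closure)
    choose yy hyy using hy
    have hymem : ∀ (i : Fin (k+1)) (m : ℕ), yy i ∈ (g m).1.1 i := by
      intro i m
      exact (hgspec m).2.1 i (mem_iInter.1 (hyy i) (m+1))
    refine ⟨yy, fun i => hymem i 0, ?_⟩
    have hfreq : ∃ᶠ n in atTop, δ/2 ≤ minDist T a yy n := by
      rw [frequently_atTop]
      intro N
      refine ⟨(g (N+1)).2, (hgspec N).1, ?_⟩
      unfold minDist
      exact Finset.le_inf' _ _ fun i _ =>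
        ((hgspec N).2.2 i (yy i) (hymem i (N+1))).le
    have hb : IsBoundedUnder (· ≤ ·) atTop (fun n => minDist T a yy n) :=
      Filter.isBoundedUnder_of ⟨C, fun n => hmb k a yy n⟩
    have := Filter.le_limsup_of_frequently_le hfreq hb
    linarith
  by_contra hcon
  push_neg at hcon
  have hL : LyapMRbar T < δ/2 := by linarith
  have h1 : (0:ℝ) < (LyapMRbar T + δ/2)/2 := by linarith
  have h2 : (LyapMRbar T + δ/2)/2 < δ/2 := by linarith
  have := key _ h1 h2
  linarith
end
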